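/- Let Σₙ be an alphabet of n positive integers. An infinite word y over Σₙ is a fixed point of the run-length operator Δ if and only if y = K_u for some infinite word u = u₁u₂u₃⋯ over Σₙ with u_i ≠ u_{i+1} for all i, where K_u = u₁^{u₁} u₂^{u₁} ⋯ u_{u₁}^{u₁} u_{u₁+1}^{u₂} ⋯, i.e. the word whose run base sequence is u and whose j-th run, for j in the block determined by u, has length equal to the corresponding letter of u as dictated by Δ(K_u) = K_u. -/

import Mathlib

/-- Partial sums of a sequence of run lengths. -/
def partialSum (t : ℕ → ℕ) : ℕ → ℕ
  | 0 => 0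
  | k + 1 => partialSum t k + t k

/-- `w` decomposes into maximal runs with base sequence `α` and run-length
sequence `t`. -/
def IsRunDecomp (w α t : ℕ → ℕ) : Prop :=
  (∀ k, 1 ≤ t k) ∧ (∀ k, α k ≠ α (k + 1)) ∧
    ∀ k i, partialSum t k ≤ i → i < partialSum t (k + 1) → w i = α k

/-- `t` is the run-length sequence Δ(w) of the infinite word `w`. -/
def IsDelta (w t : ℕ → ℕ) : Prop := ∃ α, IsRunDecomp w α t

lemma partialSum_mono (t : ℕ → ℕ) : Monotone (partialSum t) :=
  monotone_nat_of_le_succ fun k => Nat.le_add_right _ _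

lemma partialSum_ge (t : ℕ → ℕ) (ht : ∀ k, 1 ≤ t k) (k : ℕ) : k ≤ partialSum t k := by
  induction k with
  | zero => simp [partialSum]
  | succ k ih => have := ht k; simp only [partialSum]; omega

lemma run_index_unique {t : ℕ → ℕ} {k k' i : ℕ}
    (h1 : partialSum t k ≤ i) (h2 : i < partialSum t (k + 1))
    (h1' : partialSum t k' ≤ i) (h2' : i < partialSum t (k' + 1)) : k = k' := by
  rcases lt_trichotomy k k' with h | h | h
  · have := partialSum_mono t (show k + 1 ≤ k' by omega); omega
  · exact h
  · have := partialSum_mono t (show k' + 1 ≤ k by omega); omega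

lemma exists_run_index (t : ℕ → ℕ) (ht : ∀ k, 1 ≤ t k) (i : ℕ) :
    ∃ k, partialSum t k ≤ i ∧ i < partialSum t (k + 1) := by
  induction i with
  | zero => exact ⟨0, le_rfl, by have := ht 0; simp [partialSum]; omega⟩
  | succ i ih =>
    obtain ⟨k, h1, h2⟩ := ih
    by_cases h : i + 1 < partialSum t (k + 1)
    · exact ⟨k, by omega, h⟩
    · refine ⟨k + 1, by omega, ?_⟩
      have := ht (k + 1)
      have e : partialSum t (k + 1 + 1) = partialSum t (k + 1) + t (k + 1) := rfl
      omega

noncomputable def W (u : ℕ → ℕ) : ℕ → ℕ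
  | i =>
    if h : ∃ k, k < i ∧ (∑ j ∈ Finset.range k, if _ : j < i then W u j else 0) ≤ i ∧
        i < (∑ j ∈ Finset.range (k + 1), if _ : j < i then W u j else 0) then
      u h.choose
    else u i
  decreasing_by all_goals (rename_i hj; exact hj)

lemma partialSum_eq_sum (t : ℕ → ℕ) (k : ℕ) :
    partialSum t k = ∑ j ∈ Finset.range k, t j := by
  induction k with
  | zero => simp [partialSum]
  | succ k ih => rw [partialSum, Finset.sum_range_succ, ih]

lemma trunc_sum (u : ℕ → ℕ) {k i : ℕ} (hk : k ≤ i) :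
    (∑ j ∈ Finset.range k, if _ : j < i then W u j else 0) = partialSum (W u) k := by
  rw [partialSum_eq_sum]
  refine Finset.sum_congr rfl fun j hj => ?_
  rw [dif_pos (lt_of_lt_of_le (Finset.mem_range.mp hj) hk)]

lemma W_pos (u : ℕ → ℕ) (hu1 : ∀ m, 1 ≤ u m) (j : ℕ) : 1 ≤ W u j := by
  rw [W.eq_1]
  split <;> exact hu1 _

lemma W_spec (u : ℕ → ℕ) (hu1 : ∀ m, 1 ≤ u m) (i : ℕ) :
    ∃ k, partialSum (W u) k ≤ i ∧ i < partialSum (W u) (k + 1) ∧ W u i = u k := by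
  rw [W.eq_1]
  split
  · rename_i h
    obtain ⟨hk, h1, h2⟩ := h.choose_spec
    rw [trunc_sum u (le_of_lt hk)] at h1
    rw [trunc_sum u (by omega)] at h2
    exact ⟨h.choose, h1, h2, rfl⟩
  · rename_i h
    push_neg at h
    obtain ⟨k, h1, h2⟩ := exists_run_index (W u) (W_pos u hu1) i
    have hki : k ≤ i := le_trans (partialSum_ge (W u) (W_pos u hu1) k) h1
    have hk : k = i := by
      by_contra hne
      have hlt : k < i := lt_of_le_of_ne hki hne
      have := h k hlt (by rwa [trunc_sum u (le_of_lt hlt)])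
      rw [trunc_sum u (by omega)] at this
      omega
    subst hk
    exact ⟨k, h1, h2, rfl⟩

/-- Over an alphabet `S` of positive integers: for each `u ∈ 𝔅ₙ` (no two
consecutive letters equal) there is a unique word `K_u` whose run base
sequence is `u` and which equals its own run-length sequence; and an infinite
word `w` over `S` is a fixed point of Δ iff `w = K_u` for some such `u`. -/
theorem stmt9 (S : Finset ℕ) (hpos : ∀ x ∈ S, 0 < x) :
    (∀ u : ℕ → ℕ, (∀ i, u i ∈ S) → (∀ i, u i ≠ u (i + 1)) →
      ∃! w : ℕ → ℕ, IsRunDecomp w u w) ∧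
    (∀ w : ℕ → ℕ, (∀ i, w i ∈ S) →
      (IsDelta w w ↔
        ∃ u : ℕ → ℕ, (∀ i, u i ∈ S) ∧ (∀ i, u i ≠ u (i + 1)) ∧
          IsRunDecomp w u w)) := by
  constructor
  · intro u hu hne
    have hu1 : ∀ m, 1 ≤ u m := fun m => hpos _ (hu m)
    refine ⟨W u, ⟨W_pos u hu1, hne, ?_⟩, ?_⟩
    · intro k i h1 h2
      obtain ⟨k', h1', h2', hw⟩ := W_spec u hu1 i
      rw [hw, run_index_unique h1' h2' h1 h2]
    · -- uniqueness
      intro w hw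
      funext i
      induction i using Nat.strong_induction_on with
      | _ i ih =>
        have hps : ∀ k ≤ i, partialSum w k = partialSum (W u) k := by
          intro k hk
          induction k with
          | zero => rfl
          | succ k ihk =>
            simp only [partialSum]
            rw [ihk (by omega), ih k (by omega)]
        obtain ⟨k, h1, h2⟩ := exists_run_index w hw.1 i
        have hki : k ≤ i := le_trans (partialSum_ge w hw.1 k) h1
        have e1 : w i = u k := hw.2.2 k i h1 h2
        rw [e1]
        rcases lt_or_eq_of_le hki with hlt | heq
        · have h1' : partialSum (W u) k ≤ i := by rw [← hps k (by omega)]; exact h1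
          have h2' : i < partialSum (W u) (k + 1) := by rw [← hps (k + 1) (by omega)]; exact h2
          obtain ⟨k', h1'', h2'', hwv⟩ := W_spec u hu1 i
          rw [hwv, run_index_unique h1'' h2'' h1' h2']
        · subst heq
          have hPi : partialSum w k = k := by
            have := partialSum_ge w hw.1 k
            omega
          have hPi' : partialSum (W u) k = k := by rw [← hps k le_rfl]; exact hPi
          have h2' : k < partialSum (W u) (k + 1) := by
            have := W_pos u hu1 k
            have e : partialSum (W u) (k + 1) = partialSum (W u) k + W u k := rfl
            omega
          obtain ⟨k', h1'', h2'', hwv⟩ := W_spec u hu1 k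
          rw [hwv, run_index_unique h1'' h2'' (le_of_eq hPi') h2']
  · intro w hwS
    constructor
    · rintro ⟨α, hα⟩
      refine ⟨α, fun k => ?_, hα.2.1, hα⟩
      have h2 : partialSum w k < partialSum w (k + 1) := by
        have := hα.1 k
        have e : partialSum w (k + 1) = partialSum w k + w k := rfl
        omega
      rw [← hα.2.2 k (partialSum w k) le_rfl h2]
      exact hwS _
    · rintro ⟨v, _, _, hv⟩
      exact ⟨v, hv⟩
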